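/- Let C be a linear [n,k]_q code and 1 ≤ r ≤ k. Let d_r be the r-th generalized Hamming weight of C, i.e., the minimum size of the support of an r-dimensional subcode of C. Then n ≥ d_r + Σ_{i=1}^{k-r} ⌈d_r / (q^i · v_r)⌉, where v_r = (q^r - 1)/(q - 1). -/

import Mathlib

open Module

/-- The support of a subcode `D ≤ F_q^n`: the coordinate positions where some codeword
of `D` is non-zero. -/
def codeSupp {n : ℕ} {F : Type*} [Field F] (D : Submodule F (Fin n → F)) : Set (Fin n) :=
  {i : Fin n | ∃ c ∈ D, c i ≠ 0}

set_option synthInstance.maxHeartbeats 1000000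
set_option maxHeartbeats 1000000

lemma codeSupp_mono {n : ℕ} {F : Type*} [Field F] {D E : Submodule F (Fin n → F)}
    (h : D ≤ E) : codeSupp D ⊆ codeSupp E := by
  rintro i ⟨c, hc, hci⟩; exact ⟨c, h hc, hci⟩

lemma lemB {n : ℕ} {F : Type*} [Field F] [Fintype F] (E : Submodule F (Fin n → F))
    {m : ℕ} (hm : finrank F E = m) (h1 : 1 ≤ m) :
    ∃ H : Submodule F (Fin n → F), H ≤ E ∧ finrank F H = m - 1 ∧
      (codeSupp H).ncard * (Fintype.card F ^ m - 1) ≤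
        (codeSupp E).ncard * (Fintype.card F * (Fintype.card F ^ (m - 1) - 1)) := by
  classical
  set q := Fintype.card F with hq
  have hq2 : 2 ≤ q := Fintype.one_lt_card
  haveI : FiniteDimensional F E := inferInstance
  haveI : Finite E := inferInstance
  haveI : Finite (Module.Dual F E) :=
    Finite.of_injective (fun φ => (φ : E → F)) DFunLike.coe_injective
  haveI : Fintype (Module.Dual F E) := Fintype.ofFinite _
  have hcardDual : Fintype.card (Module.Dual F E) = q ^ m := by
    rw [card_eq_pow_finrank (K := F), Subspace.dual_finrank_eq, hm]
  -- the hyperplane associated to a functional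
  set Hsub : Module.Dual F E → Submodule F (Fin n → F) :=
    fun φ => (LinearMap.ker φ).map E.subtype with hHsub
  have hHle : ∀ φ, Hsub φ ≤ E := fun φ => Submodule.map_subtype_le E _
  have hker : ∀ φ : Module.Dual F E, φ ≠ 0 → finrank F (LinearMap.ker φ) = m - 1 := by
    intro φ hφ
    have hr : LinearMap.range φ = ⊤ := by
      obtain ⟨x, hx⟩ : ∃ x, φ x ≠ 0 := by
        by_contra h; push_neg at h; exact hφ (LinearMap.ext fun x => by simp [h x])
      refine Submodule.eq_top_iff'.2 fun y => ⟨(y / φ x) • x, by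
        simp [map_smul, div_mul_cancel₀, hx]⟩
    have := LinearMap.finrank_range_add_finrank_ker φ
    rw [hr, finrank_top, finrank_self, hm] at this
    omega
  have hHrank : ∀ φ : Module.Dual F E, φ ≠ 0 → finrank F (Hsub φ) = m - 1 := by
    intro φ hφ
    rw [hHsub]
    rw [Submodule.finrank_map_subtype_eq]
    exact hker φ hφ
  -- supports as filters
  have hncard : ∀ s : Set (Fin n), s.ncard = (Finset.univ.filter (· ∈ s)).card := by
    intro s
    rw [Set.ncard_eq_toFinset_card' s, Set.toFinset_card, Fintype.card_subtype]
  set S : Finset (Module.Dual F E) := Finset.univ.filter (· ≠ 0) with hS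
  have hScard : S.card = q ^ m - 1 := by
    have : S = Finset.univ.erase 0 := by
      ext φ; simp [hS, Finset.mem_erase]
    rw [this, Finset.card_erase_of_mem (Finset.mem_univ _), Finset.card_univ, hcardDual]
  -- the double counting
  have hcount : ∀ i : Fin n, i ∈ codeSupp E →
      (S.filter (fun φ => i ∈ codeSupp (Hsub φ))).card = q ^ m - q := by
    intro i hi
    set evi : Module.Dual F E := (LinearMap.proj i).comp E.subtype with hevi
    have hevi0 : evi ≠ 0 := by
      obtain ⟨c, hc, hci⟩ := hi
      intro h
      exact hci (by simpa [hevi] using DFunLike.congr_fun h (⟨c, hc⟩ : E))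
    have hkevi : finrank F (LinearMap.ker evi) = m - 1 := hker evi hevi0
    set A : Submodule F (Module.Dual F E) := (LinearMap.ker evi).dualAnnihilator with hA
    -- for nonzero φ : i ∉ supp (Hsub φ) ↔ φ ∈ A
    have hiff : ∀ φ : Module.Dual F E, φ ≠ 0 → (i ∉ codeSupp (Hsub φ) ↔ φ ∈ A) := by
      intro φ hφ
      have h1 : i ∉ codeSupp (Hsub φ) ↔ LinearMap.ker φ ≤ LinearMap.ker evi := by
        constructor
        · intro h x hx
          have : (x : Fin n → F) i = 0 := by
            by_contra hxi
            exact h ⟨(x : Fin n → F), ⟨x, hx, rfl⟩, hxi⟩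
          simpa [hevi] using this
        · rintro h ⟨c, ⟨x, hx, rfl⟩, hci⟩
          exact hci (by simpa [hevi] using h hx)
      have h2 : φ ∈ A ↔ LinearMap.ker evi ≤ LinearMap.ker φ := by
        rw [hA, Submodule.mem_dualAnnihilator]
        exact ⟨fun h x hx => h x hx, fun h x hx => h hx⟩
      rw [h1, h2]
      constructor
      · intro h
        have h4 : LinearMap.ker φ = LinearMap.ker evi :=
          Submodule.eq_of_le_of_finrank_le h (by rw [hkevi, hker φ hφ])
        exact h4.ge
      · intro h
        have h4 : LinearMap.ker evi = LinearMap.ker φ :=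
          Submodule.eq_of_le_of_finrank_le h (by rw [hkevi, hker φ hφ])
        exact h4.ge
    -- cardinality of A
    haveI : Fintype A := Fintype.ofFinite _
    have hAcard : Nat.card A = q := by
      have hfr : finrank F A = 1 := by
        have h3 := Submodule.finrank_quotient_add_finrank (LinearMap.ker evi)
        rw [hm, hkevi] at h3
        have h4 : finrank F (↥E ⧸ LinearMap.ker evi) = finrank F A :=
          (Subspace.quotEquivAnnihilator (LinearMap.ker evi)).finrank_eq
        omega
      rw [Nat.card_eq_fintype_card, card_eq_pow_finrank (K := F), hfr, pow_one]
    -- split the filter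
    have hsplit := Finset.card_filter_add_card_filter_not
      (s := S) (p := fun φ => i ∈ codeSupp (Hsub φ))
    rw [hScard] at hsplit
    have hneg : (S.filter (fun φ => ¬ i ∈ codeSupp (Hsub φ))).card = q - 1 := by
      have heq : S.filter (fun φ => ¬ i ∈ codeSupp (Hsub φ))
          = (Finset.univ.filter (· ∈ A)).erase 0 := by
        ext φ
        simp only [hS, Finset.mem_filter, Finset.filter_filter, Finset.mem_erase,
          Finset.mem_univ, true_and]
        constructor
        · rintro ⟨hφ, hsupp⟩; exact ⟨hφ, (hiff φ hφ).1 hsupp⟩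
        · rintro ⟨hφ, hAm⟩; exact ⟨hφ, (hiff φ hφ).2 hAm⟩
      have h5 : (Finset.univ.filter (fun φ => φ ∈ A)).card = Nat.card A := by
        have h6 : Finset.univ.filter (fun φ => φ ∈ A) = (A : Set (Module.Dual F E)).toFinset := by
          ext φ; simp
        rw [h6, Set.toFinset_card, ← Nat.card_eq_fintype_card]
        rfl
      rw [heq, Finset.card_erase_of_mem (by simp [Finset.mem_filter]), h5, hAcard]
    have hqle : q ≤ q ^ m := Nat.le_self_pow (by omega) q
    omega
  have hcount0 : ∀ i : Fin n, i ∉ codeSupp E →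
      (S.filter (fun φ => i ∈ codeSupp (Hsub φ))).card = 0 := by
    intro i hi
    rw [Finset.card_eq_zero, Finset.filter_eq_empty_iff]
    intro φ _
    exact fun hmem => hi (codeSupp_mono (hHle φ) hmem)
  have hsum : ∑ φ ∈ S, (codeSupp (Hsub φ)).ncard = (codeSupp E).ncard * (q ^ m - q) := by
    have : ∑ φ ∈ S, (codeSupp (Hsub φ)).ncard
        = ∑ φ ∈ S, ∑ i : Fin n, if i ∈ codeSupp (Hsub φ) then 1 else 0 := by
      refine Finset.sum_congr rfl fun φ _ => ?_
      rw [hncard, Finset.card_filter]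
    rw [this, Finset.sum_comm]
    have : ∀ i : Fin n, (∑ φ ∈ S, if i ∈ codeSupp (Hsub φ) then 1 else 0)
        = if i ∈ codeSupp E then q ^ m - q else 0 := by
      intro i
      rw [← Finset.card_filter]
      by_cases hi : i ∈ codeSupp E
      · rw [hcount i hi, if_pos hi]
      · rw [hcount0 i hi, if_neg hi]
    rw [Finset.sum_congr rfl fun i _ => this i, Finset.sum_ite, Finset.sum_const,
      Finset.sum_const_zero, add_zero, smul_eq_mul, hncard (codeSupp E)]
  -- choose minimal
  have hSne : S.Nonempty := by
    rw [← Finset.card_pos, hScard]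
    have : 2 ≤ q ^ m := le_trans hq2 (Nat.le_self_pow (by omega) q)
    omega
  obtain ⟨φ₀, hφ₀S, hmin⟩ := S.exists_min_image (fun φ => (codeSupp (Hsub φ)).ncard) hSne
  refine ⟨Hsub φ₀, hHle φ₀, hHrank φ₀ (by simpa [hS] using hφ₀S), ?_⟩
  have : S.card • (codeSupp (Hsub φ₀)).ncard ≤ ∑ φ ∈ S, (codeSupp (Hsub φ)).ncard :=
    Finset.card_nsmul_le_sum S _ _ hmin
  rw [hsum, hScard, smul_eq_mul] at this
  have hqm : q * (q ^ (m - 1) - 1) = q ^ m - q := by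
    have : q ^ m = q * q ^ (m - 1) := by
      conv_lhs => rw [show m = 1 + (m - 1) by omega]
      rw [pow_add, pow_one]
    rw [Nat.mul_sub, mul_one, ← this]
  rw [hqm, mul_comm]
  exact this

lemma claimP {n : ℕ} {F : Type*} [Field F] [Fintype F] (C : Submodule F (Fin n → F))
    {r dr : ℕ} (hr1 : 1 ≤ r)
    (hlb : ∀ D : Submodule F (Fin n → F), D ≤ C → finrank F D = r →
      dr ≤ (codeSupp D).ncard) :
    ∀ j (E : Submodule F (Fin n → F)), E ≤ C → finrank F E = r + j →
      dr * (Fintype.card F ^ (r + j) - 1) ≤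
        (codeSupp E).ncard * (Fintype.card F ^ j * (Fintype.card F ^ r - 1)) := by
  set q := Fintype.card F with hq
  have hq2 : 2 ≤ q := Fintype.one_lt_card
  intro j
  induction j with
  | zero =>
    intro E hEC hE
    simpa using Nat.mul_le_mul_right _ (hlb E hEC (by omega))
  | succ j ih =>
    intro E hEC hE
    obtain ⟨H, hHE, hHrank, hBB⟩ := lemB E hE (by omega)
    rw [show r + (j + 1) - 1 = r + j by omega] at hBB hHrank
    have ihH := ih H (hHE.trans hEC) hHrank
    have hpos : 0 < q ^ (r + j) - 1 := by
      have : q ≤ q ^ (r + j) := Nat.le_self_pow (by omega) q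
      omega
    apply Nat.le_of_mul_le_mul_right _ hpos
    set a := (codeSupp E).ncard
    set b := (codeSupp H).ncard
    set A1 := q ^ (r + (j + 1)) - 1 with hA1
    set A2 := q ^ (r + j) - 1 with hA2
    set A3 := q ^ r - 1 with hA3
    calc dr * A1 * A2 = dr * A2 * A1 := by ring
      _ ≤ b * (q ^ j * A3) * A1 := Nat.mul_le_mul_right _ ihH
      _ = b * A1 * (q ^ j * A3) := by ring
      _ ≤ a * (q * A2) * (q ^ j * A3) := Nat.mul_le_mul_right _ hBB
      _ = a * (q ^ (j + 1) * A3) * A2 := by ring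

lemma claimQ {n : ℕ} {F : Type*} [Field F] [Fintype F] (C : Submodule F (Fin n → F))
    {r dr : ℕ} (hr1 : 1 ≤ r)
    (hlb : ∀ D : Submodule F (Fin n → F), D ≤ C → finrank F D = r →
      dr ≤ (codeSupp D).ncard) :
    ∀ j (E : Submodule F (Fin n → F)), E ≤ C → finrank F E = r + j →
      dr + ∑ i ∈ Finset.Icc 1 j,
        ⌈(dr : ℚ) / ((Fintype.card F : ℚ) ^ i *
          ((((Fintype.card F) ^ r - 1) / (Fintype.card F - 1) : ℕ) : ℚ))⌉₊
        ≤ (codeSupp E).ncard := by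
  set q := Fintype.card F with hq
  have hq2 : 2 ≤ q := Fintype.one_lt_card
  set v : ℕ := (q ^ r - 1) / (q - 1) with hvdef
  have hdvd : (q - 1) ∣ (q ^ r - 1) := by
    simpa using Nat.sub_dvd_pow_sub_pow q 1 r
  have hv : v * (q - 1) = q ^ r - 1 := Nat.div_mul_cancel hdvd
  have hv1 : 1 ≤ v := by
    have h1 : q ≤ q ^ r := Nat.le_self_pow (by omega) q
    rcases Nat.eq_zero_or_pos v with h | h
    · rw [h] at hv; omega
    · exact h
  intro j
  induction j with
  | zero =>
    intro E hEC hE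
    simpa using hlb E hEC (by omega)
  | succ j ih =>
    intro E hEC hE
    obtain ⟨H, hHE, hHrank, hBB⟩ := lemB E hE (by omega)
    rw [show r + (j + 1) - 1 = r + j by omega] at hBB hHrank
    have ihH := ih H (hHE.trans hEC) hHrank
    have hP := claimP C hr1 hlb (j + 1) E hEC hE
    set a := (codeSupp E).ncard with ha
    set b := (codeSupp H).ncard with hb
    have hab : b ≤ a :=
      Set.ncard_le_ncard (codeSupp_mono hHE) (Set.toFinite _)
    -- basic positivity facts
    have h1a : 1 ≤ q ^ (r + (j + 1)) := Nat.one_le_pow _ _ (by omega)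
    have h1b : 1 ≤ q ^ (r + j) := Nat.one_le_pow _ _ (by omega)
    have h1c : 1 ≤ q ^ r := Nat.one_le_pow _ _ (by omega)
    have hqQ : (2:ℚ) ≤ (q:ℚ) := by exact_mod_cast hq2
    have hXgt : (1:ℚ) < (q:ℚ) ^ (r + (j + 1)) := by
      have : 1 < q ^ (r + (j + 1)) := Nat.one_lt_pow (by omega) (by omega)
      exact_mod_cast this
    have hPpos : (0:ℚ) < (q:ℚ) ^ (r + (j + 1)) - 1 := by linarith
    -- cast the two key inequalities to ℚ
    have hBBQ : (b:ℚ) * ((q:ℚ) ^ (r + (j + 1)) - 1)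
        ≤ (a:ℚ) * ((q:ℚ) * ((q:ℚ) ^ (r + j) - 1)) := by
      have := (Nat.cast_le (α := ℚ)).2 hBB
      rw [← hq] at this
      push_cast [Nat.cast_sub h1a, Nat.cast_sub h1b] at this
      convert this using 2 <;> push_cast <;> ring
    have hPQ : (dr:ℚ) * ((q:ℚ) ^ (r + (j + 1)) - 1)
        ≤ (a:ℚ) * ((q:ℚ) ^ (j + 1) * ((q:ℚ) ^ r - 1)) := by
      have := (Nat.cast_le (α := ℚ)).2 hP
      rw [← hq] at this
      push_cast [Nat.cast_sub h1a, Nat.cast_sub h1c] at this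
      convert this using 2 <;> push_cast <;> ring
    have hvQ : (v:ℚ) * ((q:ℚ) - 1) = (q:ℚ) ^ r - 1 := by
      have := congrArg (Nat.cast (R := ℚ)) hv
      push_cast [Nat.cast_sub h1c, Nat.cast_sub (show 1 ≤ q by omega)] at this
      exact this
    -- the new ceiling term is at most a - b
    have hceil : ⌈(dr : ℚ) / ((q : ℚ) ^ (j + 1) * (v : ℚ))⌉₊ ≤ a - b := by
      rw [Nat.ceil_le, Nat.cast_sub hab]
      have hvq : (0 : ℚ) < (q : ℚ) ^ (j + 1) * (v : ℚ) := by
        have h0q : (0:ℚ) < (q:ℚ) := by linarith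
        have h0v : (0:ℚ) < (v:ℚ) := by exact_mod_cast hv1
        positivity
      rw [div_le_iff₀ hvq]
      have hrw : (q:ℚ) * ((q:ℚ) ^ (r + j) - 1) = (q:ℚ) ^ (r + (j + 1)) - (q:ℚ) := by ring
      rw [hrw] at hBBQ
      have key1 : (a:ℚ) * ((q:ℚ) - 1)
          ≤ ((a:ℚ) - (b:ℚ)) * ((q:ℚ) ^ (r + (j + 1)) - 1) := by linarith
      have hfac : (0:ℚ) ≤ (q:ℚ) ^ (j + 1) * (v:ℚ) := le_of_lt hvq
      have key2 := mul_le_mul_of_nonneg_right key1 hfac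
      have hrw2 : (a:ℚ) * ((q:ℚ) ^ (j + 1) * ((q:ℚ) ^ r - 1))
          = (a:ℚ) * ((q:ℚ) - 1) * ((q:ℚ) ^ (j + 1) * (v:ℚ)) := by
        rw [← hvQ]; ring
      rw [hrw2] at hPQ
      have final : (dr:ℚ) * ((q:ℚ) ^ (r + (j + 1)) - 1)
          ≤ (((a:ℚ) - (b:ℚ)) * ((q:ℚ) ^ (j + 1) * (v:ℚ)))
            * ((q:ℚ) ^ (r + (j + 1)) - 1) := by nlinarith [key2, hPQ]
      exact le_of_mul_le_mul_right final hPpos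
    have hsum := Finset.sum_Icc_succ_top (show 1 ≤ j + 1 by omega)
      (fun i => ⌈(dr : ℚ) / ((q : ℚ) ^ i * (v : ℚ))⌉₊)
    rw [hsum]
    omega


/-- The generalized Griesmer bound: if `C` is a linear `[n,k]_q` code, `1 ≤ r ≤ k`, and `dr`
is the `r`-th generalized Hamming weight of `C` (the minimum support size of an
`r`-dimensional subcode), then `n ≥ dr + Σ_{i=1}^{k-r} ⌈dr/(q^i·v_r)⌉` where
`v_r = (q^r-1)/(q-1)`. -/
theorem stmt4 {F : Type*} [Field F] [Fintype F] {n k r dr : ℕ}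
    (C : Submodule F (Fin n → F)) (hdim : finrank F C = k)
    (hr1 : 1 ≤ r) (hrk : r ≤ k)
    (hlb : ∀ D : Submodule F (Fin n → F), D ≤ C → finrank F D = r →
      dr ≤ (codeSupp D).ncard)
    (hex : ∃ D : Submodule F (Fin n → F), D ≤ C ∧ finrank F D = r ∧
      (codeSupp D).ncard = dr) :
    dr + ∑ i ∈ Finset.Icc 1 (k - r),
      ⌈(dr : ℚ) / ((Fintype.card F : ℚ) ^ i *
        ((((Fintype.card F) ^ r - 1) / (Fintype.card F - 1) : ℕ) : ℚ))⌉₊ ≤ n := by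
  have hC : finrank F C = r + (k - r) := by rw [hdim]; omega
  have h := claimQ C hr1 hlb (k - r) C le_rfl hC
  have hn : (codeSupp C).ncard ≤ n := by
    have := Set.ncard_le_ncard (Set.subset_univ (codeSupp C)) Set.finite_univ
    simpa [Set.ncard_univ] using this
  exact le_trans h hn
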